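/- We have ∑_{k=1}^{∞} ((μ(k) - φ(k))/k) · log(1 - 1/τ^k) = 1, where τ = (1 + √5)/2 is the golden ratio. -/

import Mathlib

open Real

private lemma moebius_abs_le (n : ℕ) : |(ArithmeticFunction.moebius n : ℝ)| ≤ 1 := by
  by_cases h : Squarefree n
  · rw [ArithmeticFunction.moebius_apply_of_squarefree h]
    push_cast
    rw [abs_pow, abs_neg, abs_one, one_pow]
  · rw [ArithmeticFunction.moebius_eq_zero_of_not_squarefree h]
    simp

private lemma sum_moebius_div (n : ℕ) :
    ∑ d ∈ n.divisors, (ArithmeticFunction.moebius d : ℝ) = if n = 1 then 1 else 0 := by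
  have h : ((ArithmeticFunction.moebius * ArithmeticFunction.zeta : ArithmeticFunction ℤ)) n
      = (1 : ArithmeticFunction ℤ) n := by
    rw [ArithmeticFunction.moebius_mul_coe_zeta]
  rw [ArithmeticFunction.coe_mul_zeta_apply, ArithmeticFunction.one_apply] at h
  have h2 := congrArg (fun z : ℤ => (z : ℝ)) h
  push_cast at h2
  simpa using h2

private lemma aux_series {x : ℝ} (hx0 : 0 < x) (hx1 : x < 1) :
    ∑' k : ℕ,
        (((ArithmeticFunction.moebius (k + 1) : ℝ) - (Nat.totient (k + 1) : ℝ)) /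
            (k + 1 : ℝ)) *
          Real.log (1 - x ^ (k + 1)) = x ^ 2 / (1 - x) := by
  set a : ℕ → ℝ := fun n => (ArithmeticFunction.moebius n : ℝ) - (Nat.totient n : ℝ) with ha
  set F : ℕ × ℕ → ℝ := fun p =>
    -(a (p.1 + 1) * x ^ ((p.1 + 1) * (p.2 + 1)) / (((p.1 + 1) * (p.2 + 1) : ℕ) : ℝ)) with hFdef
  have hxabs : ∀ k : ℕ, |x ^ (k + 1)| < 1 := fun k => by
    rw [abs_of_nonneg (pow_nonneg hx0.le _)]
    exact pow_lt_one₀ hx0.le hx1 k.succ_ne_zero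
  -- row sums
  have hrow : ∀ k : ℕ, HasSum (fun m => F (k, m))
      (a (k + 1) / (k + 1 : ℝ) * Real.log (1 - x ^ (k + 1))) := by
    intro k
    have h := (hasSum_pow_div_log_of_abs_lt_one (hxabs k)).mul_left
      (-(a (k + 1) / ((k : ℝ) + 1)))
    refine (congrArg₂ (fun (f : ℕ → ℝ) (b : ℝ) => HasSum f b) ?_ ?_).mpr h
    · funext m
      simp only [hFdef]
      rw [← pow_mul]
      push_cast
      have hk : ((k : ℝ) + 1) ≠ 0 := by positivity
      have hm : ((m : ℝ) + 1) ≠ 0 := by positivity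
      field_simp
    · ring
  -- summability
  have habs : ∀ n : ℕ, |a n| ≤ 2 * ((n : ℝ) + 1) := by
    intro n
    have h1 : |(ArithmeticFunction.moebius n : ℝ)| ≤ 1 := moebius_abs_le n
    have h2 : (Nat.totient n : ℝ) ≤ n := Nat.cast_le.mpr (Nat.totient_le n)
    have h3 : (0 : ℝ) ≤ (Nat.totient n : ℝ) := Nat.cast_nonneg _
    calc |a n| ≤ |(ArithmeticFunction.moebius n : ℝ)| + |(Nat.totient n : ℝ)| := abs_sub _ _
      _ ≤ 1 + (n : ℝ) := by
          rw [abs_of_nonneg h3]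
          exact add_le_add h1 h2
      _ ≤ 2 * ((n : ℝ) + 1) := by linarith [Nat.cast_nonneg (α := ℝ) n]
  have hsummable : Summable F := by
    have hgeo : Summable (fun p : ℕ × ℕ => (4 * x ^ p.1) * x ^ p.2) :=
      ((summable_geometric_of_lt_one hx0.le hx1).mul_left 4).mul_of_nonneg
        (summable_geometric_of_lt_one hx0.le hx1)
        (fun k => by positivity) (fun m => by positivity)
    refine Summable.of_norm_bounded hgeo ?_
    rintro ⟨k, m⟩
    have hk1 : (0 : ℝ) < (k : ℝ) + 1 := by positivity
    have hm1 : (0 : ℝ) < (m : ℝ) + 1 := by positivity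
    have hxN : (0 : ℝ) ≤ x ^ ((k + 1) * (m + 1)) := by positivity
    have hle : k + m ≤ (k + 1) * (m + 1) := by nlinarith
    have hpow : x ^ ((k + 1) * (m + 1)) ≤ x ^ (k + m) :=
      pow_le_pow_of_le_one hx0.le hx1.le hle
    have hcast : (((k + 1) * (m + 1) : ℕ) : ℝ) = ((k : ℝ) + 1) * ((m : ℝ) + 1) := by push_cast; ring
    calc ‖F (k, m)‖
        = |a (k + 1)| * x ^ ((k + 1) * (m + 1)) / (((k : ℝ) + 1) * ((m : ℝ) + 1)) := by
          simp only [hFdef, norm_neg, norm_div, norm_mul, Real.norm_eq_abs, hcast]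
          rw [abs_of_nonneg hxN, abs_of_pos hk1, abs_of_pos hm1]
      _ ≤ (2 * ((k : ℝ) + 1 + 1)) * x ^ ((k + 1) * (m + 1)) / (((k : ℝ) + 1) * ((m : ℝ) + 1)) := by
          gcongr
          have := habs (k + 1)
          push_cast at this ⊢
          linarith
      _ ≤ (2 * (2 * ((k : ℝ) + 1))) * x ^ ((k + 1) * (m + 1)) / (((k : ℝ) + 1) * 1) := by
          gcongr
          · linarith
          · linarith
      _ = 4 * x ^ ((k + 1) * (m + 1)) := by field_simp; ring
      _ ≤ 4 * x ^ (k + m) := mul_le_mul_of_nonneg_left hpow (by norm_num)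
      _ = (4 * x ^ k) * x ^ m := by rw [pow_add]; ring
  -- fiberwise sum over n = (k+1)(m+1)
  have hfiber := hsummable.hasSum.tsum_fiberwise (fun p : ℕ × ℕ => (p.1 + 1) * (p.2 + 1))
  set c : ℕ → ℝ := fun n => if 2 ≤ n then x ^ n else 0 with hc
  have hfib_eq : (fun n : ℕ =>
      ∑' p : (fun p : ℕ × ℕ => (p.1 + 1) * (p.2 + 1)) ⁻¹' {n}, F p) = c := by
    funext n
    match n with
    | 0 =>
      have hempty : ((fun p : ℕ × ℕ => (p.1 + 1) * (p.2 + 1)) ⁻¹' {0}) = ∅ := by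
        ext ⟨k, m⟩
        simp [Nat.succ_ne_zero]
      rw [hempty]
      simp [hc]
    | (n + 1) =>
      set N := n + 1 with hNdef
      have hN : N ≠ 0 := Nat.succ_ne_zero n
      have hset : ((fun p : ℕ × ℕ => (p.1 + 1) * (p.2 + 1)) ⁻¹' {N}) =
          ↑(N.divisorsAntidiagonal.image (fun q : ℕ × ℕ => (q.1 - 1, q.2 - 1))) := by
        ext ⟨k, m⟩
        simp only [Set.mem_preimage, Set.mem_singleton_iff, Finset.coe_image, Set.mem_image,
          Finset.mem_coe, Nat.mem_divisorsAntidiagonal]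
        constructor
        · intro h
          exact ⟨(k + 1, m + 1), ⟨h, hN⟩, by simp⟩
        · rintro ⟨⟨d, e⟩, ⟨hde, -⟩, hq⟩
          have hd : d ≠ 0 := by rintro rfl; exact hN (by simpa using hde.symm)
          have he : e ≠ 0 := by rintro rfl; exact hN (by simpa using hde.symm)
          obtain ⟨hq1, hq2⟩ := Prod.mk.inj hq
          have hk : k + 1 = d := by omega
          have hm : m + 1 = e := by omega
          rw [hk, hm]; exact hde
      have hinj : ∀ q ∈ N.divisorsAntidiagonal, ∀ q' ∈ N.divisorsAntidiagonal,
          (q.1 - 1, q.2 - 1) = (q'.1 - 1, q'.2 - 1) → q = q' := by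
        rintro ⟨d, e⟩ hq ⟨d', e'⟩ hq' h
        obtain ⟨h1, h2⟩ := Nat.ne_zero_of_mem_divisorsAntidiagonal hq
        obtain ⟨h1', h2'⟩ := Nat.ne_zero_of_mem_divisorsAntidiagonal hq'
        obtain ⟨ha1, ha2⟩ := Prod.mk.inj h
        simp only [Prod.mk.injEq]
        omega
      rw [hset, Finset.tsum_subtype' (N.divisorsAntidiagonal.image
          (fun q : ℕ × ℕ => (q.1 - 1, q.2 - 1))) F, Finset.sum_image hinj]
      have hterm : ∀ q ∈ N.divisorsAntidiagonal,
          F (q.1 - 1, q.2 - 1) = -(a q.1 * x ^ N / (N : ℝ)) := by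
        intro q hq
        obtain ⟨h1, h2⟩ := Nat.ne_zero_of_mem_divisorsAntidiagonal hq
        have hde := (Nat.mem_divisorsAntidiagonal.mp hq).1
        simp only [hFdef]
        have e1 : q.1 - 1 + 1 = q.1 := by omega
        have e2 : q.2 - 1 + 1 = q.2 := by omega
        rw [e1, e2, hde]
      rw [Finset.sum_congr rfl hterm,
        Nat.sum_divisorsAntidiagonal (fun d _ => -(a d * x ^ N / (N : ℝ)))]
      have hsumdiv : ∑ d ∈ N.divisors, a d = (if N = 1 then 1 else 0) - (N : ℝ) := by
        simp only [ha]
        rw [Finset.sum_sub_distrib, sum_moebius_div N]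
        have h2 : ∑ d ∈ N.divisors, (Nat.totient d : ℝ) = (N : ℝ) := by
          rw [← Nat.cast_sum]
          exact_mod_cast congrArg (Nat.cast (R := ℝ)) (Nat.sum_totient N)
        rw [h2]
      have hNR : ((N : ℝ)) ≠ 0 := Nat.cast_ne_zero.mpr hN
      have hsplit : ∑ d ∈ N.divisors, -(a d * x ^ N / (N : ℝ))
          = -((∑ d ∈ N.divisors, a d) * x ^ N / (N : ℝ)) := by
        rw [Finset.sum_mul, Finset.sum_div]
        exact Finset.sum_neg_distrib _
      rw [hsplit, hsumdiv]
      by_cases hN1 : N = 1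
      · simp [hc, hN1]
      · have hN2 : 2 ≤ N := by omega
        simp only [hc]
        rw [if_neg hN1, if_pos hN2]
        field_simp
        ring
  rw [hfib_eq] at hfiber
  -- sum of c
  have hcgeo : HasSum c (x ^ 2 / (1 - x)) := by
    have h := (hasSum_geometric_of_lt_one hx0.le hx1).mul_left (x ^ 2)
    have h2 : HasSum (fun n : ℕ => c (n + 2)) (x ^ 2 / (1 - x)) := by
      have he : (fun n : ℕ => c (n + 2)) = fun n : ℕ => x ^ 2 * x ^ n := by
        funext n
        simp only [hc, if_pos (by omega : 2 ≤ n + 2)]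
        rw [pow_add, mul_comm]
      rw [he]
      simpa [div_eq_mul_inv] using h
    have h3 := (hasSum_nat_add_iff (f := c) 2).mp h2
    have hzero : ∑ i ∈ Finset.range 2, c i = 0 := by
      norm_num [hc, Finset.sum_range_succ]
    rw [hzero, add_zero] at h3
    exact h3
  have hsumF : ∑' p, F p = x ^ 2 / (1 - x) := hfiber.unique hcgeo
  have hmain : HasSum (fun k => a (k + 1) / ((k : ℝ) + 1) * Real.log (1 - x ^ (k + 1)))
      (∑' p, F p) := hsummable.hasSum.prod_fiberwise hrow
  rw [hsumF] at hmain
  exact hmain.tsum_eq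


theorem golden_moebius_totient_series :
    ∑' k : ℕ,
        (((ArithmeticFunction.moebius (k + 1) : ℝ) - (Nat.totient (k + 1) : ℝ)) /
            (k + 1 : ℝ)) *
          Real.log (1 - 1 / ((1 + Real.sqrt 5) / 2) ^ (k + 1)) = 1 := by
  have h5 : Real.sqrt 5 ^ 2 = 5 := Real.sq_sqrt (by norm_num)
  have hs2 : (2 : ℝ) ≤ Real.sqrt 5 := by nlinarith [Real.sqrt_nonneg 5]
  have hs3 : Real.sqrt 5 < 3 := by nlinarith [Real.sqrt_nonneg 5]
  set x : ℝ := (Real.sqrt 5 - 1) / 2 with hx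
  have hx0 : 0 < x := by rw [hx]; linarith
  have hx1 : x < 1 := by rw [hx]; linarith
  have hτ : (0 : ℝ) < (1 + Real.sqrt 5) / 2 := by linarith
  have hinv : 1 / ((1 + Real.sqrt 5) / 2) = x := by
    rw [hx, div_eq_div_iff (by linarith) (by norm_num)]
    nlinarith
  have hrw : ∀ k : ℕ, 1 / ((1 + Real.sqrt 5) / 2) ^ (k + 1) = x ^ (k + 1) := by
    intro k
    rw [← one_div_pow, hinv]
  calc ∑' k : ℕ,
        (((ArithmeticFunction.moebius (k + 1) : ℝ) - (Nat.totient (k + 1) : ℝ)) /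
            (k + 1 : ℝ)) *
          Real.log (1 - 1 / ((1 + Real.sqrt 5) / 2) ^ (k + 1))
      = ∑' k : ℕ,
        (((ArithmeticFunction.moebius (k + 1) : ℝ) - (Nat.totient (k + 1) : ℝ)) /
            (k + 1 : ℝ)) *
          Real.log (1 - x ^ (k + 1)) := by
        refine tsum_congr fun k => ?_
        rw [hrw k]
    _ = x ^ 2 / (1 - x) := aux_series hx0 hx1
    _ = 1 := by
        rw [div_eq_one_iff_eq (by rw [hx]; intro h; nlinarith : (1 : ℝ) - x ≠ 0), hx]
        nlinarith
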